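/- Bressoud's even-modulus identity: for every positive integer m, ∑_{s₁ ≥ ··· ≥ s_m ≥ 0} q^{s₁²+···+s_m²} / ((q;q)_{s₁−s₂} ··· (q;q)_{s_{m−1}−s_m} (q²;q²)_{s_m}) = (q^{2m+2};q^{2m+2})_∞ / (q;q)_∞ · θ(q^{m+1}; q^{2m+2}), as formal power series in q. -/

import Mathlib

open scoped Classical

open PowerSeries

noncomputable section BressoudProof

/-- `(q;q)_k` as a power series over `ℚ`. -/
noncomputable def qp (k : ℕ) : PowerSeries ℚ :=
  ∏ j ∈ Finset.range k, (1 - (PowerSeries.X : PowerSeries ℚ) ^ (j + 1))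

/-- `(q²;q²)_k` as a power series over `ℚ`. -/
noncomputable def qp2 (k : ℕ) : PowerSeries ℚ :=
  ∏ j ∈ Finset.range k, (1 - (PowerSeries.X : PowerSeries ℚ) ^ (2 * (j + 1)))




/-- `(x^p; x^p)_k` -/
def pk (p k : ℕ) : PowerSeries ℚ :=
  ∏ j ∈ Finset.range k, (1 - (PowerSeries.X : PowerSeries ℚ) ^ (p * (j + 1)))

def pc (p k : ℕ) : PowerSeries ℚ := (pk p k)⁻¹

def podd (p n : ℕ) : PowerSeries ℚ :=
  ∏ j ∈ Finset.range n, (1 - (PowerSeries.X : PowerSeries ℚ) ^ (p * (2 * j + 1)))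

lemma constCoeff_one_sub_X_pow {e : ℕ} (he : 0 < e) :
    constantCoeff (1 - (X : PowerSeries ℚ) ^ e) = 1 := by
  simp [map_sub, map_pow, constantCoeff_X, zero_pow he.ne']

lemma constCoeff_pk {p : ℕ} (hp : 0 < p) (k : ℕ) : constantCoeff (pk p k) = 1 := by
  rw [pk, map_prod]
  rw [Finset.prod_eq_one]
  intro j _
  exact constCoeff_one_sub_X_pow (by positivity)

lemma pk_ne_zero {p : ℕ} (hp : 0 < p) (k : ℕ) : pk p k ≠ 0 := by
  intro h
  have := constCoeff_pk hp k
  rw [h] at this; simp at this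

lemma pk_mul_pc {p : ℕ} (hp : 0 < p) (k : ℕ) : pk p k * pc p k = 1 :=
  PowerSeries.mul_inv_cancel _ (by rw [constCoeff_pk hp]; norm_num)

lemma pc_mul_pk {p : ℕ} (hp : 0 < p) (k : ℕ) : pc p k * pk p k = 1 := by
  rw [mul_comm]; exact pk_mul_pc hp k

lemma constCoeff_pc {p : ℕ} (hp : 0 < p) (k : ℕ) : constantCoeff (pc p k) = 1 := by
  have := congrArg (constantCoeff) (pk_mul_pc hp k)
  rw [map_mul, constCoeff_pk hp, one_mul, map_one] at this
  exact this

lemma pc_ne_zero {p : ℕ} (hp : 0 < p) (k : ℕ) : pc p k ≠ 0 := by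
  intro h
  have := constCoeff_pc hp k
  rw [h] at this; simp at this

lemma pk_succ (p k : ℕ) : pk p (k + 1) = pk p k * (1 - X ^ (p * (k + 1))) := by
  rw [pk, Finset.prod_range_succ]; rfl

lemma one_sub_mul_pc_succ {p : ℕ} (hp : 0 < p) (k : ℕ) :
    (1 - (X : PowerSeries ℚ) ^ (p * (k + 1))) * pc p (k + 1) = pc p k := by
  rw [pc, pk_succ, PowerSeries.mul_inv_rev, ← mul_assoc,
    PowerSeries.mul_inv_cancel _ (by rw [constCoeff_one_sub_X_pow (by positivity)]; norm_num),
    one_mul, pc]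

lemma pc_zero (p : ℕ) : pc p 0 = 1 := by
  rw [pc, pk, Finset.range_zero, Finset.prod_empty, inv_one]

/-- specializations at p = 1 -/
lemma pc1_pred (k : ℕ) : (1 - (X : PowerSeries ℚ) ^ (k + 1)) * pc 1 (k + 1) = pc 1 k := by
  have := one_sub_mul_pc_succ (p := 1) one_pos k
  rwa [one_mul] at this



/-- congruence modulo X^(d+1) -/
def md (d : ℕ) (A B : PowerSeries ℚ) : Prop := (X : PowerSeries ℚ)^(d+1) ∣ (A - B)

lemma md_refl {d : ℕ} (A : PowerSeries ℚ) : md d A A := by simp [md]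

lemma md_symm {d : ℕ} {A B : PowerSeries ℚ} (h : md d A B) : md d B A := by
  have := h.neg_right
  simpa [md] using (dvd_neg.mpr h)

lemma md_trans {d : ℕ} {A B C : PowerSeries ℚ} (h : md d A B) (h' : md d B C) : md d A C := by
  have := dvd_add h h'
  simpa [md, sub_add_sub_cancel] using this

lemma md_mul {d : ℕ} {A B C D : PowerSeries ℚ} (h : md d A B) (h' : md d C D) :
    md d (A * C) (B * D) := by
  have : A * C - B * D = A * (C - D) + (A - B) * D := by ring
  rw [md, this]
  exact dvd_add (Dvd.dvd.mul_left h' A) (Dvd.dvd.mul_right h D)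

lemma md_add {d : ℕ} {A B C D : PowerSeries ℚ} (h : md d A B) (h' : md d C D) :
    md d (A + C) (B + D) := by
  have : A + C - (B + D) = (A - B) + (C - D) := by ring
  rw [md, this]; exact dvd_add h h'

lemma md_sum {d : ℕ} {ι : Type*} (s : Finset ι) (f g : ι → PowerSeries ℚ)
    (h : ∀ i ∈ s, md d (f i) (g i)) : md d (∑ i ∈ s, f i) (∑ i ∈ s, g i) := by
  classical
  induction s using Finset.induction with
  | empty => simpa using md_refl (0 : PowerSeries ℚ)
  | @insert a s' hx ih =>
    rw [Finset.sum_insert hx, Finset.sum_insert hx]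
    exact md_add (h a (Finset.mem_insert_self a s')) (ih fun i hi => h i (Finset.mem_insert_of_mem hi))

lemma md_coeff {d : ℕ} {A B : PowerSeries ℚ} (h : md d A B) :
    PowerSeries.coeff d A = PowerSeries.coeff d B := by
  have := (PowerSeries.X_pow_dvd_iff).mp h d (Nat.lt_succ_self d)
  rw [map_sub] at this
  linarith [this]

lemma md_X_pow_mul_zero {d e : ℕ} (he : d < e) (C : PowerSeries ℚ) :
    md d ((X : PowerSeries ℚ)^e * C) 0 := by
  rw [md, sub_zero]
  exact Dvd.dvd.mul_right (pow_dvd_pow _ (by omega)) C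

lemma md_inv {d : ℕ} {A B : PowerSeries ℚ} (h : md d A B)
    (hA : constantCoeff A ≠ 0) (hB : constantCoeff B ≠ 0) : md d A⁻¹ B⁻¹ := by
  have key : A⁻¹ - B⁻¹ = A⁻¹ * (B - A) * B⁻¹ := by
    rw [mul_sub, sub_mul, PowerSeries.inv_mul_cancel _ hA, mul_assoc,
      PowerSeries.mul_inv_cancel _ hB, one_mul, mul_one]
  rw [md, key]
  exact ((md_symm h).mul_left _).mul_right _

lemma md_one_sub_X_pow {d e : ℕ} (he : d < e) : md d (1 - (X : PowerSeries ℚ)^e) 1 := by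
  rw [md, sub_sub_cancel_left]
  exact (dvd_neg).mpr (pow_dvd_pow _ (by omega))

/-- Gaussian binomial `[M choose u]` in base `x^p`. -/
def gbp (p M u : ℕ) : PowerSeries ℚ :=
  if u ≤ M then pk p M * (pc p u * pc p (M - u)) else 0

/-- squared distance `(u-n)²` as a natural number -/
def nsq (u n : ℕ) : ℕ := (u - n)^2 + (n - u)^2

lemma nsq_symm (n j : ℕ) (h : j ≤ n) : nsq (n - j) n = nsq (n + j) n := by
  have h1 : n - (n - j) = j := by omega
  have h2 : n - j - n = 0 := by omega
  have h3 : n + j - n = j := by omega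
  have h4 : n - (n + j) = 0 := by omega
  simp [nsq, h1, h2, h3, h4]

lemma gbp_zero {p : ℕ} (hp : 0 < p) (M : ℕ) : gbp p M 0 = 1 := by
  rw [gbp, if_pos (Nat.zero_le M), pc_zero, one_mul, Nat.sub_zero, pk_mul_pc hp]

lemma gbp_self {p : ℕ} (hp : 0 < p) (M : ℕ) : gbp p M M = 1 := by
  rw [gbp, if_pos le_rfl, Nat.sub_self, pc_zero, mul_one, pk_mul_pc hp]

lemma gbp_of_gt {p M u : ℕ} (h : M < u) : gbp p M u = 0 := by
  rw [gbp, if_neg (by omega)]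

/-- Pascal recurrence A: `[M+1; u+1] = [M; u] + x^{p(u+1)} [M; u+1]`. -/
lemma gbp_pascalA {p : ℕ} (hp : 0 < p) (M u : ℕ) :
    gbp p (M + 1) (u + 1) = gbp p M u + X ^ (p * (u + 1)) * gbp p M (u + 1) := by
  rcases Nat.lt_or_ge M u with h | h
  · -- u > M : all terms zero or boundary
    rcases Nat.eq_or_lt_of_le (Nat.succ_le_of_lt h) with h' | h'
    · -- u = M+1? no, h : M < u means u ≥ M+1
      -- h' : M + 1 = u
      subst h'
      rw [gbp_of_gt (by omega), gbp_of_gt (by omega), gbp_of_gt (by omega)]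
      simp
    · rw [gbp_of_gt (by omega), gbp_of_gt (by omega), gbp_of_gt (by omega)]
      simp
  · -- u ≤ M
    rcases Nat.eq_or_lt_of_le h with h' | h'
    · -- u = M
      subst h'
      rw [gbp_self hp, gbp_self hp, gbp_of_gt (by omega)]
      simp
    · -- u < M : the main case
      have hu1M : u + 1 ≤ M := h'
      apply mul_right_cancel₀ (b := pk p (u + 1) * pk p (M - u)) (by
        exact mul_ne_zero (pk_ne_zero hp _) (pk_ne_zero hp _))
      rw [gbp, if_pos (by omega), gbp, if_pos (by omega), gbp, if_pos (by omega)]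
      have e1 : M + 1 - (u + 1) = M - u := by omega
      have e2 : M - u = (M - u - 1) + 1 := by omega
      rw [e1]
      -- LHS
      have L : pk p (M + 1) * (pc p (u + 1) * pc p (M - u)) * (pk p (u + 1) * pk p (M - u))
          = pk p (M + 1) := by
        calc pk p (M + 1) * (pc p (u + 1) * pc p (M - u)) * (pk p (u + 1) * pk p (M - u))
            = pk p (M + 1) * ((pc p (u + 1) * pk p (u + 1)) * (pc p (M - u) * pk p (M - u))) := by
              ring
          _ = pk p (M + 1) := by rw [pc_mul_pk hp, pc_mul_pk hp]; ring
      rw [L]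
      -- RHS distribute
      rw [add_mul]
      have R1 : pk p M * (pc p u * pc p (M - u)) * (pk p (u + 1) * pk p (M - u))
          = pk p M * (1 - X ^ (p * (u + 1))) := by
        rw [pk_succ p u]
        calc pk p M * (pc p u * pc p (M - u)) * (pk p u * (1 - X ^ (p * (u + 1))) * pk p (M - u))
            = pk p M * (1 - X ^ (p * (u + 1))) *
                ((pc p u * pk p u) * (pc p (M - u) * pk p (M - u))) := by ring
          _ = pk p M * (1 - X ^ (p * (u + 1))) := by
              rw [pc_mul_pk hp, pc_mul_pk hp]; ring
      have R2 : X ^ (p * (u + 1)) * (pk p M * (pc p (u + 1) * pc p (M - (u + 1)))) *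
            (pk p (u + 1) * pk p (M - u))
          = X ^ (p * (u + 1)) * (pk p M * (1 - X ^ (p * (M - u)))) := by
        have e3 : M - (u + 1) = M - u - 1 := by omega
        rw [e3]
        conv_lhs => rw [e2, pk_succ p (M - u - 1)]
        have e4 : M - u - 1 + 1 = M - u := by omega
        rw [e4]
        calc X ^ (p * (u + 1)) * (pk p M * (pc p (u + 1) * pc p (M - u - 1))) *
              (pk p (u + 1) * (pk p (M - u - 1) * (1 - X ^ (p * (M - u)))))
            = X ^ (p * (u + 1)) * (pk p M * (1 - X ^ (p * (M - u)))) *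
                ((pc p (u + 1) * pk p (u + 1)) * (pc p (M - u - 1) * pk p (M - u - 1))) := by
              ring
          _ = X ^ (p * (u + 1)) * (pk p M * (1 - X ^ (p * (M - u)))) := by
              rw [pc_mul_pk hp, pc_mul_pk hp]; ring
      rw [R1, R2, pk_succ p M]
      have e5 : p * (u + 1) + p * (M - u) = p * (M + 1) := by
        have : (u + 1) + (M - u) = M + 1 := by omega
        rw [← Nat.mul_add, this]
      calc pk p M * (1 - X ^ (p * (M + 1)))
          = pk p M * (1 - X ^ (p * (u + 1)) + X ^ (p * (u + 1)) *
              (1 - X ^ (p * (M - u)))) := by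
            rw [← e5, pow_add]; ring
        _ = pk p M * (1 - X ^ (p * (u + 1))) +
              X ^ (p * (u + 1)) * (pk p M * (1 - X ^ (p * (M - u)))) := by ring

/-- shrink: `(1 - x^{p(M+1-u)}) [M+1; u] = (1 - x^{p(M+1)}) [M; u]`. -/
lemma gbp_shrink {p : ℕ} (hp : 0 < p) (M u : ℕ) (hu : u ≤ M) :
    (1 - (X : PowerSeries ℚ) ^ (p * (M + 1 - u))) * gbp p (M + 1) u
      = (1 - X ^ (p * (M + 1))) * gbp p M u := by
  have e2 : M + 1 - u = (M - u) + 1 := by omega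
  rw [gbp, if_pos (by omega : u ≤ M + 1), gbp, if_pos hu, e2]
  have e3 : M + 1 - u = M - u + 1 := e2
  calc (1 - (X : PowerSeries ℚ) ^ (p * (M - u + 1))) *
        (pk p (M + 1) * (pc p u * pc p (M - u + 1)))
      = pk p (M + 1) * pc p u *
          ((1 - X ^ (p * (M - u + 1))) * pc p (M - u + 1)) := by ring
    _ = pk p (M + 1) * pc p u * pc p (M - u) := by rw [one_sub_mul_pc_succ hp]
    _ = (1 - X ^ (p * (M + 1))) * (pk p M * (pc p u * pc p (M - u))) := by
        rw [pk_succ p M]; ring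


-- continuation: assumes s3 definitions present (will paste after)

lemma neg_one_pow_add_two (a : ℕ) : ((-1 : PowerSeries ℚ)) ^ (a + 2) = (-1) ^ a := by
  rw [pow_add]; norm_num

lemma nsq_succ_succ (v n : ℕ) : nsq (v + 1) (n + 1) = nsq v n := by
  simp [nsq, Nat.succ_sub_succ]

lemma nsq_zero_left (n : ℕ) : nsq 0 n = n ^ 2 := by simp [nsq]

lemma nsq_self (n : ℕ) : nsq n n = 0 := by simp [nsq]

lemma nsq_step (v n : ℕ) (h : v ≤ 2 * n + 1) :
    nsq v (n + 1) + v = nsq v n + (2 * n + 1 - v) := by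
  rcases le_or_gt v n with hv | hv
  · obtain ⟨k, rfl⟩ : ∃ k, n = v + k := ⟨n - v, by omega⟩
    have e1 : nsq v (v + k + 1) = (k+1)^2 := by simp [nsq, show v + k + 1 - v = k+1 by omega, show v - (v+k+1) = 0 by omega]
    have e2 : nsq v (v + k) = k^2 := by simp [nsq, show v + k - v = k by omega, show v - (v+k) = 0 by omega]
    rw [e1, e2]
    have h3 : 2 * (v + k) + 1 - v = v + 2*k + 1 := by omega
    rw [h3]
    have h4 : (k+1)^2 = k^2 + 2*k + 1 := by ring
    rw [h4]
    omega
  · obtain ⟨k, rfl⟩ : ∃ k, v = n + 1 + k := ⟨v - n - 1, by omega⟩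
    have hk : k ≤ n := by omega
    have e1 : nsq (n+1+k) (n + 1) = k^2 := by simp [nsq, show n+1+k - (n+1) = k by omega, show (n+1) - (n+1+k) = 0 by omega]
    have e2 : nsq (n+1+k) n = (k+1)^2 := by simp [nsq, show n+1+k - n = k+1 by omega, show n - (n+1+k) = 0 by omega]
    rw [e1, e2]
    have h3 : 2 * n + 1 - (n+1+k) = n - k := by omega
    rw [h3]
    have h4 : (k+1)^2 = k^2 + 2*k + 1 := by ring
    rw [h4]
    omega

def ff (p n : ℕ) : PowerSeries ℚ :=
  ∑ u ∈ Finset.range (2 * n + 1),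
    (-1 : PowerSeries ℚ) ^ (u + n) * X ^ (p * nsq u n) * gbp p (2 * n) u

lemma ff_zero (p : ℕ) (hp : 0 < p) : ff p 0 = 1 := by
  simp [ff, nsq, gbp_zero hp]

lemma ff_succ {p : ℕ} (hp : 0 < p) (n : ℕ) :
    ff p (n + 1) = (1 - X ^ (p * (2 * n + 1))) * ff p n := by
  have h2 : 2 * (n + 1) = (2 * n + 2) := by ring
  set F : ℕ → PowerSeries ℚ := fun u =>
    (-1 : PowerSeries ℚ) ^ (u + (n+1)) * X ^ (p * nsq u (n+1)) * gbp p (2*n+2) u with hF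
  have hffn1 : ff p (n+1) = ∑ u ∈ Finset.range (2*n+2+1), F u := by
    rw [ff, h2]
  set g : ℕ → PowerSeries ℚ := fun w =>
    (-1 : PowerSeries ℚ) ^ (w + n + 1) * X ^ (p * nsq w (n+1) + p * w) * gbp p (2*n+1) w with hg
  set A : ℕ → PowerSeries ℚ := fun v =>
    (-1 : PowerSeries ℚ) ^ (v + n) * X ^ (p * nsq v n) * gbp p (2*n+1) v with hA
  -- step 1: F (v+1) = A v + g (v+1)
  have step1 : ∀ v, F (v + 1) = A v + g (v + 1) := by
    intro v
    rw [hF, hg, hA]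
    simp only []
    rw [gbp_pascalA hp (2*n+1) v]
    rw [nsq_succ_succ]
    rw [show v + 1 + (n + 1) = (v + n) + 2 by ring, neg_one_pow_add_two]
    rw [show v + 1 + n + 1 = (v + n) + 2 by ring, neg_one_pow_add_two]
    rw [mul_add]
    congr 1
    rw [pow_add]
    ring
  -- step 2: sum over range (2n+3)
  have e0 : F 0 = g 0 := by
    simp only [hF, hg, gbp_zero hp, Nat.mul_zero, Nat.add_zero, Nat.zero_add, mul_one]
  have sumF : ff p (n+1) = ∑ v ∈ Finset.range (2*n+2), F (v+1) + F 0 := by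
    rw [hffn1, Finset.sum_range_succ']
  have sumg : ∑ v ∈ Finset.range (2*n+2), g (v+1) + g 0 = ∑ w ∈ Finset.range (2*n+2), g w := by
    rw [← Finset.sum_range_succ']
    rw [Finset.sum_range_succ]
    have : g (2*n+2) = 0 := by
      rw [hg]; simp only []
      rw [gbp_of_gt (by omega), mul_zero]
    rw [this, add_zero]
  have key : ff p (n+1) = ∑ v ∈ Finset.range (2*n+2), (A v + g v) := by
    rw [sumF, e0, Finset.sum_congr rfl (fun v _ => step1 v), Finset.sum_add_distrib,
      add_assoc, sumg, ← Finset.sum_add_distrib]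
  -- step 3: pointwise combine
  have comb : ∀ v ∈ Finset.range (2*n+2), A v + g v =
      (-1 : PowerSeries ℚ) ^ (v + n) * X ^ (p * nsq v n) *
        ((1 - X ^ (p * (2*n+1-v))) * gbp p (2*n+1) v) := by
    intro v hv
    have hv' : v ≤ 2*n+1 := by
      have := Finset.mem_range.mp hv; omega
    rw [hA, hg]
    simp only []
    have hexp : p * nsq v (n+1) + p * v = p * nsq v n + p * (2*n+1-v) := by
      rw [← Nat.mul_add, ← Nat.mul_add, nsq_step v n hv']
    rw [hexp]
    rw [pow_succ]
    rw [pow_add, pow_add]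
    ring
  rw [key, Finset.sum_congr rfl comb]
  -- step 4: shrink
  have shrink : ∀ v ∈ Finset.range (2*n+2),
      (-1 : PowerSeries ℚ) ^ (v + n) * X ^ (p * nsq v n) *
        ((1 - X ^ (p * (2*n+1-v))) * gbp p (2*n+1) v)
      = (1 - X ^ (p * (2*n+1))) *
          ((-1 : PowerSeries ℚ) ^ (v + n) * X ^ (p * nsq v n) * gbp p (2*n) v) := by
    intro v hv
    have hv' : v ≤ 2*n+1 := by
      have := Finset.mem_range.mp hv; omega
    rcases Nat.eq_or_lt_of_le hv' with h | h
    · subst h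
      simp [gbp_of_gt (show (2*n:ℕ) < 2*n+1 by omega), Nat.sub_self]
    · have hv2 : v ≤ 2*n := by omega
      rw [gbp_shrink hp (2*n) v hv2]
      ring
  rw [Finset.sum_congr rfl shrink, ← Finset.mul_sum]
  congr 1
  rw [Finset.sum_range_succ, gbp_of_gt (show (2*n:ℕ) < 2*n+1 by omega), mul_zero, add_zero]
  rfl

lemma ff_eq_podd {p : ℕ} (hp : 0 < p) (n : ℕ) : ff p n = podd p n := by
  induction n with
  | zero => rw [ff_zero p hp, podd]; simp
  | succ n ih =>
    rw [ff_succ hp n, ih,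
      show podd p (n+1) = podd p n * (1 - X^(p*(2*n+1))) from by
        rw [podd, podd, Finset.prod_range_succ]]
    ring

lemma neg_one_pow_parity {a b : ℕ} (h : a % 2 = b % 2) :
    ((-1 : PowerSeries ℚ)) ^ a = (-1) ^ b := by
  conv_lhs => rw [← Nat.div_add_mod a 2]
  conv_rhs => rw [← Nat.div_add_mod b 2]
  rw [pow_add, pow_add, pow_mul, pow_mul, h]
  norm_num

lemma base_div {p : ℕ} (hp : 0 < p) (n : ℕ) :
    ∑ u ∈ Finset.range (2*n+1),
      (-1 : PowerSeries ℚ) ^ (u + n) * X ^ (p * nsq u n) * (pc p u * pc p (2*n - u))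
      = podd p n * pc p (2*n) := by
  have hff := ff_eq_podd hp n
  rw [ff] at hff
  have key : ∑ u ∈ Finset.range (2*n+1),
      (-1 : PowerSeries ℚ) ^ (u + n) * X ^ (p * nsq u n) * (pc p u * pc p (2*n - u))
      = pc p (2*n) * ∑ u ∈ Finset.range (2*n+1),
          (-1 : PowerSeries ℚ) ^ (u + n) * X ^ (p * nsq u n) * gbp p (2*n) u := by
    rw [Finset.mul_sum]
    apply Finset.sum_congr rfl
    intro u hu
    have hu' : u ≤ 2*n := by have := Finset.mem_range.mp hu; omega
    rw [gbp, if_pos hu']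
    calc (-1 : PowerSeries ℚ) ^ (u + n) * X ^ (p * nsq u n) * (pc p u * pc p (2*n - u))
        = (pc p (2*n) * pk p (2*n)) *
            ((-1 : PowerSeries ℚ) ^ (u + n) * X ^ (p * nsq u n) * (pc p u * pc p (2*n - u))) := by
          rw [pc_mul_pk hp, one_mul]
      _ = pc p (2*n) * ((-1:PowerSeries ℚ) ^ (u + n) * X ^ (p * nsq u n) *
            (pk p (2*n) * (pc p u * pc p (2*n - u)))) := by ring
  rw [key, hff, mul_comm]

lemma fold (n : ℕ) (g : ℕ → PowerSeries ℚ) (hg : ∀ j, j ≤ n → g (n - j) = g (n + j)) :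
    ∑ u ∈ Finset.range (2*n+1), g u
      = ∑ j ∈ Finset.range (n+1), (if j = 0 then (1:PowerSeries ℚ) else 2) * g (n + j) := by
  have split : ∑ u ∈ Finset.range (2*n+1), g u
      = ∑ u ∈ Finset.range n, g u + ∑ u ∈ Finset.Ico n (2*n+1), g u := by
    rw [Finset.range_eq_Ico, ← Finset.sum_Ico_consecutive _ (Nat.zero_le n) (by omega : n ≤ 2*n+1),
      ← Finset.range_eq_Ico]
  have part2 : ∑ u ∈ Finset.Ico n (2*n+1), g u = ∑ i ∈ Finset.range (n+1), g (n + i) := by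
    rw [Finset.sum_Ico_eq_sum_range, show 2*n+1-n = n+1 by omega]
  have part1 : ∑ u ∈ Finset.range n, g u = ∑ j ∈ Finset.range n, g (n + (j+1)) := by
    rw [← Finset.sum_range_reflect]
    apply Finset.sum_congr rfl
    intro j hj
    have hj' : j < n := Finset.mem_range.mp hj
    have e : n - 1 - j = n - (j+1) := by omega
    rw [e, hg (j+1) (by omega)]
  rw [split, part1, part2, Finset.sum_range_succ' (fun i => g (n+i)) n,
    Finset.sum_range_succ' (fun j => (if j = 0 then (1:PowerSeries ℚ) else 2) * g (n + j)) n]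
  have e1 : ∀ j : ℕ, (if j + 1 = 0 then (1:PowerSeries ℚ) else 2) = 2 := fun j => if_neg (Nat.succ_ne_zero j)
  have e2 : (if (0:ℕ) = 0 then (1:PowerSeries ℚ) else 2) = 1 := if_pos rfl
  simp only [e1, e2, Nat.add_zero, one_mul]
  have e3 : ∑ x ∈ Finset.range n, 2 * g (n+(x+1))
      = ∑ x ∈ Finset.range n, g (n+(x+1)) + ∑ x ∈ Finset.range n, g (n+(x+1)) := by
    rw [← Finset.sum_add_distrib]
    exact Finset.sum_congr rfl (fun j _ => two_mul _)
  rw [e3]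
  norm_num
  ring

lemma base_folded {p : ℕ} (hp : 0 < p) (n : ℕ) :
    ∑ j ∈ Finset.range (n+1), (if j = 0 then (1:PowerSeries ℚ) else 2) *
        ((-1 : PowerSeries ℚ) ^ j * X ^ (p * j^2) * (pc p (n-j) * pc p (n+j)))
      = podd p n * pc p (2*n) := by
  set g : ℕ → PowerSeries ℚ := fun u =>
    (-1 : PowerSeries ℚ) ^ (u + n) * X ^ (p * nsq u n) * (pc p u * pc p (2*n - u)) with hgdef
  have hsym : ∀ j, j ≤ n → g (n - j) = g (n + j) := by
    intro j hj
    rw [hgdef]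
    simp only []
    have e2 : nsq (n-j) n = j^2 := by
      simp [nsq, show n - (n - j) = j by omega, show n - j - n = 0 by omega]
    have e3 : nsq (n+j) n = j^2 := by
      simp [nsq, show n + j - n = j by omega, show n - (n+j) = 0 by omega]
    have e4 : 2*n - (n - j) = n + j := by omega
    have e5 : 2*n - (n + j) = n - j := by omega
    rw [e2, e3, e4, e5]
    rw [neg_one_pow_parity (a := n - j + n) (b := n + j + n) (by omega)]
    ring
  rw [← base_div hp n, fold n g hsym]
  apply Finset.sum_congr rfl
  intro j hj
  have hj' : j ≤ n := by have := Finset.mem_range.mp hj; omega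
  rw [hgdef]
  simp only []
  have e3 : nsq (n+j) n = j^2 := by
    simp [nsq, show n + j - n = j by omega, show n - (n+j) = 0 by omega]
  have e5 : 2*n - (n + j) = n - j := by omega
  rw [e3, e5, neg_one_pow_parity (a := n + j + n) (b := j) (by omega)]
  ring

/-- The key Bailey-chain summation identity. -/
lemma Hlem : ∀ M A : ℕ,
    ∑ r ∈ Finset.range (M+1),
      (X : PowerSeries ℚ) ^ (r*(r+A)) * (pc 1 (M-r) * pc 1 r * pc 1 (r+A))
      = pc 1 M * pc 1 (M+A) := by
  intro M
  induction M with
  | zero =>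
    intro A
    simp [pc_zero]
  | succ M ih =>
    intro A
    have hne : (1 - (X:PowerSeries ℚ)^(M+1)) ≠ 0 := by
      intro h
      have := constCoeff_one_sub_X_pow (e := M+1) (by omega)
      rw [h] at this; simp at this
    apply mul_left_cancel₀ hne
    have pointwise : ∀ r ∈ Finset.range (M+2),
        (1 - (X:PowerSeries ℚ)^(M+1)) *
          ((X : PowerSeries ℚ) ^ (r*(r+A)) * (pc 1 (M+1-r) * pc 1 r * pc 1 (r+A)))
        = (if r ≤ M then (X : PowerSeries ℚ) ^ (r*(r+A)) * (pc 1 (M-r) * pc 1 r * pc 1 (r+A)) else 0)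
          + (if 1 ≤ r then (X : PowerSeries ℚ) ^ (r*(r+A)) * X^(M+1-r) *
              (pc 1 (M+1-r) * pc 1 (r-1) * pc 1 (r+A)) else 0) := by
      intro r hr
      have hr' : r ≤ M + 1 := by have := Finset.mem_range.mp hr; omega
      rcases Nat.eq_zero_or_pos r with rfl | hrpos
      · rw [if_pos (Nat.zero_le M), if_neg (by omega)]
        rw [add_zero, Nat.sub_zero, Nat.sub_zero]
        calc (1 - (X:PowerSeries ℚ)^(M+1)) * (X ^ (0*(0+A)) * (pc 1 (M+1) * pc 1 0 * pc 1 (0+A)))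
            = X ^ (0*(0+A)) * (((1 - (X:PowerSeries ℚ)^(M+1)) * pc 1 (M+1)) * pc 1 0 * pc 1 (0+A)) := by
              ring
          _ = X ^ (0*(0+A)) * (pc 1 M * pc 1 0 * pc 1 (0+A)) := by rw [pc1_pred M]
      rcases Nat.eq_or_lt_of_le hr' with rfl | hrM
      · -- r = M+1
        rw [if_neg (by omega), if_pos (by omega), zero_add, Nat.sub_self, pow_zero, mul_one,
          Nat.add_sub_cancel]
        calc (1 - (X:PowerSeries ℚ)^(M+1)) * (X ^ ((M+1)*(M+1+A)) * (pc 1 0 * pc 1 (M+1) * pc 1 (M+1+A)))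
            = X ^ ((M+1)*(M+1+A)) * (pc 1 0 * ((1 - (X:PowerSeries ℚ)^(M+1)) * pc 1 (M+1)) * pc 1 (M+1+A)) := by
              ring
          _ = X ^ ((M+1)*(M+1+A)) * (pc 1 0 * pc 1 M * pc 1 (M+1+A)) := by rw [pc1_pred M]
      · -- 1 ≤ r ≤ M
        have hrM' : r ≤ M := by omega
        obtain ⟨t, ht⟩ : ∃ t, r = t + 1 := ⟨r - 1, by omega⟩
        subst ht
        rw [if_pos hrM', if_pos (show (1:ℕ) ≤ t+1 by omega)]
        have e1 : M + 1 - (t+1) = (M - (t+1)) + 1 := by omega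
        have e2 : (1 : PowerSeries ℚ) - X^(M+1) =
            (1 - X^(M+1-(t+1))) + X^(M+1-(t+1)) * (1 - X^(t+1)) := by
          have h5 : M+1-(t+1) + (t+1) = M+1 := by omega
          rw [mul_sub, mul_one, ← pow_add, h5]
          ring
        rw [e2, add_mul]
        congr 1
        · calc (1 - (X:PowerSeries ℚ)^(M+1-(t+1))) *
              (X ^ ((t+1)*(t+1+A)) * (pc 1 (M+1-(t+1)) * pc 1 (t+1) * pc 1 (t+1+A)))
              = X ^ ((t+1)*(t+1+A)) * (((1 - (X:PowerSeries ℚ)^((M-(t+1))+1)) * pc 1 ((M-(t+1))+1)) * pc 1 (t+1) * pc 1 (t+1+A)) := by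
                rw [← e1]
                ring
            _ = X ^ ((t+1)*(t+1+A)) * (pc 1 (M-(t+1)) * pc 1 (t+1) * pc 1 (t+1+A)) := by
                rw [pc1_pred]
            _ = X ^ ((t+1)*(t+1+A)) * (pc 1 (M-(t+1)) * pc 1 (t+1) * pc 1 (t+1+A)) := rfl
        · calc X^(M+1-(t+1)) * (1 - (X:PowerSeries ℚ)^(t+1)) *
              (X ^ ((t+1)*(t+1+A)) * (pc 1 (M+1-(t+1)) * pc 1 (t+1) * pc 1 (t+1+A)))
              = X ^ ((t+1)*(t+1+A)) * X^(M+1-(t+1)) *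
                  (pc 1 (M+1-(t+1)) * ((1 - (X:PowerSeries ℚ)^(t+1)) * pc 1 (t+1)) * pc 1 (t+1+A)) := by
                ring
            _ = X ^ ((t+1)*(t+1+A)) * X^(M+1-(t+1)) *
                  (pc 1 (M+1-(t+1)) * pc 1 t * pc 1 (t+1+A)) := by rw [pc1_pred]
            _ = X ^ ((t+1)*(t+1+A)) * X^(M+1-(t+1)) *
                  (pc 1 (M+1-(t+1)) * pc 1 (t+1-1) * pc 1 (t+1+A)) := by rw [Nat.succ_sub_one]
      -- remaining: the subtle thing is `M - (t+1)` vs `M - t - 1`; handled by defeq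
    rw [Finset.mul_sum, Finset.sum_congr rfl pointwise, Finset.sum_add_distrib]
    have S1 : ∑ r ∈ Finset.range (M+2),
        (if r ≤ M then (X : PowerSeries ℚ) ^ (r*(r+A)) * (pc 1 (M-r) * pc 1 r * pc 1 (r+A)) else 0)
        = pc 1 M * pc 1 (M+A) := by
      rw [Finset.sum_range_succ, if_neg (by omega), add_zero]
      rw [← ih A]
      apply Finset.sum_congr rfl
      intro r hr
      rw [if_pos (by have := Finset.mem_range.mp hr; omega)]
    have S2 : ∑ r ∈ Finset.range (M+2),
        (if 1 ≤ r then (X : PowerSeries ℚ) ^ (r*(r+A)) * X^(M+1-r) *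
            (pc 1 (M+1-r) * pc 1 (r-1) * pc 1 (r+A)) else 0)
        = X^(M+A+1) * (pc 1 M * pc 1 (M+(A+1))) := by
      rw [Finset.sum_range_succ']
      rw [if_neg (by omega), add_zero]
      rw [← ih (A+1), Finset.mul_sum]
      apply Finset.sum_congr rfl
      intro v hv
      have hv' : v ≤ M := by have := Finset.mem_range.mp hv; omega
      rw [if_pos (by omega)]
      have e1 : M + 1 - (v+1) = M - v := by omega
      have e2 : v + 1 - 1 = v := by omega
      have e3 : (v+1)*(v+(A+1)) + (M - v) = v*(v+(A+1)) + (M+A+1) := by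
        obtain ⟨k, rfl⟩ : ∃ k, M = v + k := ⟨M - v, by omega⟩
        have h6 : v + k - v = k := by omega
        rw [h6]
        ring
      have e4 : v + 1 + A = v + (A+1) := by omega
      rw [e1, e2, e4, ← pow_add, e3, pow_add]
      ring
    rw [S1, S2]
    have RHS : (1 - (X:PowerSeries ℚ)^(M+1)) * (pc 1 (M+1) * pc 1 (M+1+A))
        = pc 1 M * pc 1 (M+1+A) := by
      calc (1 - (X:PowerSeries ℚ)^(M+1)) * (pc 1 (M+1) * pc 1 (M+1+A))
          = ((1 - (X:PowerSeries ℚ)^(M+1)) * pc 1 (M+1)) * pc 1 (M+1+A) := by ring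
        _ = pc 1 M * pc 1 (M+1+A) := by rw [pc1_pred]
    rw [RHS]
    have e5 : M + 1 + A = (M + A) + 1 := by omega
    have e6 : M + (A+1) = (M+A) + 1 := by omega
    rw [e5, e6]
    have e7 : pc 1 (M+A) = (1 - (X:PowerSeries ℚ)^((M+A)+1)) * pc 1 ((M+A)+1) := (pc1_pred (M+A)).symm
    rw [e7, pow_add]
    ring

lemma pk_even_split (p n : ℕ) : pk p (2*n) = pk (2*p) n * podd p n := by
  induction n with
  | zero => simp [pk, podd]
  | succ n ih =>
    have e1 : 2*(n+1) = (2*n+1)+1 := by ring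
    rw [e1, pk_succ, show (2*n+1:ℕ) = 2*n + 1 from rfl, pk_succ, ih]
    rw [show pk (2*p) (n+1) = pk (2*p) n * (1 - X^((2*p)*(n+1))) from pk_succ (2*p) n]
    rw [show podd p (n+1) = podd p n * (1 - X^(p*(2*n+1))) from by
      rw [podd, podd, Finset.prod_range_succ]]
    rw [show (2*p)*(n+1) = p * (2*n+1+1) by ring]
    ring

lemma pc2_eq {n : ℕ} : pc 2 n = podd 1 n * pc 1 (2*n) := by
  have key : pk 2 n * (podd 1 n * pc 1 (2*n)) = 1 := by
    have h := pk_even_split 1 n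
    rw [show (2*1 : ℕ) = 2 from rfl] at h
    calc pk 2 n * (podd 1 n * pc 1 (2*n)) = (pk 2 n * podd 1 n) * pc 1 (2*n) := by ring
      _ = pk 1 (2*n) * pc 1 (2*n) := by rw [← h]
      _ = 1 := pk_mul_pc one_pos _
  rw [pc]
  rw [PowerSeries.inv_eq_iff_mul_eq_one (by rw [constCoeff_pk two_pos]; norm_num)]
  have := congrArg (fun z => pc 2 n * z) key
  simp only [mul_one] at this
  calc podd 1 n * pc 1 (2*n) * pk 2 n = pk 2 n * (podd 1 n * pc 1 (2*n)) := by ring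
    _ = 1 := key

/-- the iterated Bailey chain sum -/
def TT : ℕ → ℕ → PowerSeries ℚ
  | 0, n => pc 2 n
  | (t+1), n => ∑ k ∈ Finset.range (n+1), pc 1 (n-k) * ((X:PowerSeries ℚ)^(k^2) * TT t k)

lemma sum_triangle (n : ℕ) (F : ℕ → ℕ → PowerSeries ℚ) :
    ∑ k ∈ Finset.range (n+1), ∑ j ∈ Finset.range (k+1), F k j
      = ∑ j ∈ Finset.range (n+1), ∑ k ∈ Finset.Ico j (n+1), F k j := by
  have h1 : ∀ k ∈ Finset.range (n+1),
      ∑ j ∈ Finset.range (k+1), F k j = ∑ j ∈ Finset.range (n+1), if j ≤ k then F k j else 0 := by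
    intro k hk
    have hk' : k + 1 ≤ n + 1 := by have := Finset.mem_range.mp hk; omega
    rw [← Finset.sum_subset (Finset.range_subset_range.mpr hk')
      (fun x _ hx => if_neg (by have := Finset.mem_range.not.mp hx; omega))]
    apply Finset.sum_congr rfl
    intro j hj
    rw [if_pos (by have := Finset.mem_range.mp hj; omega)]
  have h2 : ∀ j ∈ Finset.range (n+1),
      ∑ k ∈ Finset.Ico j (n+1), F k j = ∑ k ∈ Finset.range (n+1), if j ≤ k then F k j else 0 := by
    intro j hj
    have hsub : Finset.Ico j (n+1) ⊆ Finset.range (n+1) := by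
      intro x hx
      rw [Finset.mem_range]
      exact (Finset.mem_Ico.mp hx).2
    rw [← Finset.sum_subset hsub
      (fun x hx hx2 => if_neg (by
        have h3 := Finset.mem_range.mp hx
        have h4 := Finset.mem_Ico.not.mp hx2
        omega))]
    apply Finset.sum_congr rfl
    intro k hk
    rw [if_pos (Finset.mem_Ico.mp hk).1]
  rw [Finset.sum_congr rfl h1, Finset.sum_congr rfl h2, Finset.sum_comm]

lemma TT_formula (t : ℕ) : ∀ n : ℕ, TT t n
    = ∑ j ∈ Finset.range (n+1), (if j = 0 then (1:PowerSeries ℚ) else 2) *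
        ((-1 : PowerSeries ℚ) ^ j * X ^ ((t+1) * j^2) * (pc 1 (n-j) * pc 1 (n+j))) := by
  induction t with
  | zero =>
    intro n
    rw [show TT 0 n = pc 2 n from rfl, pc2_eq, ← base_folded one_pos n]
    apply Finset.sum_congr rfl
    intro j hj
    norm_num
  | succ t ih =>
    intro n
    rw [show TT (t+1) n
        = ∑ k ∈ Finset.range (n+1), pc 1 (n-k) * ((X:PowerSeries ℚ)^(k^2) * TT t k) from rfl]
    have expand : ∀ k ∈ Finset.range (n+1),
        pc 1 (n-k) * ((X:PowerSeries ℚ)^(k^2) * TT t k)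
        = ∑ j ∈ Finset.range (k+1), (if j = 0 then (1:PowerSeries ℚ) else 2) *
            ((-1 : PowerSeries ℚ) ^ j * X ^ ((t+1) * j^2) *
              (X^(k^2) * (pc 1 (n-k) * (pc 1 (k-j) * pc 1 (k+j))))) := by
      intro k hk
      rw [ih k, Finset.mul_sum, Finset.mul_sum]
      apply Finset.sum_congr rfl
      intro j hj
      ring
    rw [Finset.sum_congr rfl expand]
    rw [sum_triangle n (fun k j => (if j = 0 then (1:PowerSeries ℚ) else 2) *
        ((-1 : PowerSeries ℚ) ^ j * X ^ ((t+1) * j^2) *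
          (X^(k^2) * (pc 1 (n-k) * (pc 1 (k-j) * pc 1 (k+j))))))]
    apply Finset.sum_congr rfl
    intro j hj
    have hj' : j ≤ n := by have := Finset.mem_range.mp hj; omega
    rw [← Finset.mul_sum]
    have inner : ∑ k ∈ Finset.Ico j (n+1),
        (-1 : PowerSeries ℚ) ^ j * X ^ ((t+1) * j^2) *
          (X^(k^2) * (pc 1 (n-k) * (pc 1 (k-j) * pc 1 (k+j))))
        = (-1 : PowerSeries ℚ) ^ j * X ^ ((t+1+1) * j^2) * (pc 1 (n-j) * pc 1 (n+j)) := by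
      rw [Finset.sum_Ico_eq_sum_range, show n+1-j = (n-j)+1 by omega]
      have e : ∀ r ∈ Finset.range ((n-j)+1),
          (-1 : PowerSeries ℚ) ^ j * X ^ ((t+1) * j^2) *
            (X^((j+r)^2) * (pc 1 (n-(j+r)) * (pc 1 ((j+r)-j) * pc 1 ((j+r)+j))))
          = ((-1 : PowerSeries ℚ) ^ j * (X ^ ((t+1) * j^2) * X ^ (j^2))) *
              (X ^ (r*(r+2*j)) * (pc 1 ((n-j)-r) * pc 1 r * pc 1 (r+2*j))) := by
        intro r hr
        have hr' : r ≤ n - j := by have := Finset.mem_range.mp hr; omega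
        have e1 : (j+r)^2 = j^2 + r*(r+2*j) := by ring
        have e2 : n - (j+r) = (n-j) - r := by omega
        have e3 : (j+r) - j = r := by omega
        have e4 : (j+r) + j = r + 2*j := by omega
        rw [e1, e2, e3, e4, pow_add]
        ring
      rw [Finset.sum_congr rfl e, ← Finset.mul_sum, Hlem (n-j) (2*j)]
      rw [show (n-j) + 2*j = n + j by omega, ← pow_add]
      rw [show (t+1) * j^2 + j^2 = (t+1+1) * j^2 by ring]
    rw [inner]

lemma md_prod_one {d : ℕ} (s : Finset ℕ) (e : ℕ → ℕ) (h : ∀ i ∈ s, d < e i) :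
    md d (∏ i ∈ s, (1 - (X:PowerSeries ℚ)^(e i))) 1 := by
  classical
  induction s using Finset.induction with
  | empty => simpa using md_refl (1 : PowerSeries ℚ)
  | @insert a s' hx ih =>
    rw [Finset.prod_insert hx]
    have h1 := md_one_sub_X_pow (d := d) (e := e a) (h a (Finset.mem_insert_self a s'))
    have h2 := ih (fun i hi => h i (Finset.mem_insert_of_mem hi))
    have := md_mul h1 h2
    simpa using this

lemma md_pk_le {d p a b : ℕ} (hp : 0 < p) (hab : a ≤ b) (hda : d ≤ a) :
    md d (pk p b) (pk p a) := by
  obtain ⟨c, rfl⟩ : ∃ c, b = a + c := ⟨b - a, by omega⟩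
  have e : pk p (a + c) = pk p a * ∏ j ∈ Finset.range c, (1 - (X:PowerSeries ℚ)^(p*(a+j+1))) := by
    rw [pk, pk, Finset.prod_range_add]
  rw [e]
  have h2 : md d (∏ j ∈ Finset.range c, (1 - (X:PowerSeries ℚ)^(p*(a+j+1)))) 1 :=
    md_prod_one _ _ (fun i hi => by
      have : a + i + 1 ≤ p * (a+i+1) := Nat.le_mul_of_pos_left _ hp
      omega)
  have := md_mul (md_refl (pk p a)) h2
  simpa using this

lemma md_pk_any {d p a b : ℕ} (hp : 0 < p) (hda : d ≤ a) (hdb : d ≤ b) :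
    md d (pk p a) (pk p b) := by
  rcases le_total a b with h | h
  · exact md_symm (md_pk_le hp h hda)
  · exact md_pk_le hp h hdb

lemma md_pc_any {d p a b : ℕ} (hp : 0 < p) (hda : d ≤ a) (hdb : d ≤ b) :
    md d (pc p a) (pc p b) :=
  md_inv (md_pk_any hp hda hdb) (by rw [constCoeff_pk hp]; norm_num)
    (by rw [constCoeff_pk hp]; norm_num)

lemma md_podd_le {d p a b : ℕ} (hp : 0 < p) (hab : a ≤ b) (hd : d ≤ 2*a) :
    md d (podd p b) (podd p a) := by
  obtain ⟨c, rfl⟩ : ∃ c, b = a + c := ⟨b - a, by omega⟩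
  have e : podd p (a + c) = podd p a * ∏ j ∈ Finset.range c, (1 - (X:PowerSeries ℚ)^(p*(2*(a+j)+1))) := by
    rw [podd, podd, Finset.prod_range_add]
  rw [e]
  have h2 : md d (∏ j ∈ Finset.range c, (1 - (X:PowerSeries ℚ)^(p*(2*(a+j)+1)))) 1 :=
    md_prod_one _ _ (fun i hi => by
      have : 2*(a+i) + 1 ≤ p * (2*(a+i)+1) := Nat.le_mul_of_pos_left _ hp
      omega)
  have := md_mul (md_refl (podd p a)) h2
  simpa using this

lemma md_podd_any {d p a b : ℕ} (hp : 0 < p) (hda : d ≤ 2*a) (hdb : d ≤ 2*b) :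
    md d (podd p a) (podd p b) := by
  rcases le_total a b with h | h
  · exact md_symm (md_podd_le hp h hda)
  · exact md_podd_le hp h hdb

lemma md_zero_eq {d : ℕ} (e : ℕ) {A : PowerSeries ℚ} (B : PowerSeries ℚ)
    (hA : A = X^e * B) (he : d < e) : md d A 0 := by
  rw [md, sub_zero, hA]
  exact Dvd.dvd.mul_right (pow_dvd_pow _ (by omega)) B

lemma partB (t d : ℕ) :
    md d (∑ k ∈ Finset.range (d+1), (X:PowerSeries ℚ)^(k^2) * TT t k)
         (pc 1 d * (pk (t+2) d * podd (t+2) (2*d))) := by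
  have hp : 0 < t + 2 := by omega
  set L0 := ∑ k ∈ Finset.range (d+1), (X:PowerSeries ℚ)^(k^2) * TT t k with hL0
  have hTTdef : TT (t+1) (2*d)
      = ∑ k ∈ Finset.range (2*d+1), pc 1 (2*d-k) * ((X:PowerSeries ℚ)^(k^2) * TT t k) := rfl
  -- B1 : pk 1 d * TT (t+1) (2d) ≡ L0
  have step : md d (TT (t+1) (2*d))
      (∑ k ∈ Finset.range (2*d+1),
        if k ≤ d then pc 1 d * ((X:PowerSeries ℚ)^(k^2) * TT t k) else 0) := by
    rw [hTTdef]
    apply md_sum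
    intro k hk
    by_cases hkd : k ≤ d
    · rw [if_pos hkd]
      exact md_mul (md_pc_any one_pos (by omega) (by omega)) (md_refl _)
    · rw [if_neg hkd]
      have h1 : d < k := by omega
      have h2 : k ≤ k^2 := by nlinarith
      exact md_zero_eq (k^2) (pc 1 (2*d-k) * TT t k) (by ring) (by omega)
  have collapse : (∑ k ∈ Finset.range (2*d+1),
        if k ≤ d then pc 1 d * ((X:PowerSeries ℚ)^(k^2) * TT t k) else 0)
      = ∑ k ∈ Finset.range (d+1), pc 1 d * ((X:PowerSeries ℚ)^(k^2) * TT t k) := by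
    rw [← Finset.sum_subset (Finset.range_subset_range.mpr (by omega : d+1 ≤ 2*d+1))
      (fun x hx hx2 => if_neg (by have := Finset.mem_range.not.mp hx2; omega))]
    exact Finset.sum_congr rfl (fun k hk => if_pos (by have := Finset.mem_range.mp hk; omega))
  have B1 : md d (pk 1 d * TT (t+1) (2*d)) L0 := by
    have h4 : md d (pk 1 d * TT (t+1) (2*d))
        (pk 1 d * ∑ k ∈ Finset.range (d+1), pc 1 d * ((X:PowerSeries ℚ)^(k^2) * TT t k)) := by
      apply md_mul (md_refl _)
      rw [← collapse]
      exact step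
    have h5 : pk 1 d * ∑ k ∈ Finset.range (d+1), pc 1 d * ((X:PowerSeries ℚ)^(k^2) * TT t k)
        = L0 := by
      rw [Finset.mul_sum, hL0]
      apply Finset.sum_congr rfl
      intro k hk
      calc pk 1 d * (pc 1 d * ((X:PowerSeries ℚ)^(k^2) * TT t k))
          = (pk 1 d * pc 1 d) * ((X:PowerSeries ℚ)^(k^2) * TT t k) := by ring
        _ = (X:PowerSeries ℚ)^(k^2) * TT t k := by rw [pk_mul_pc one_pos, one_mul]
    rw [← h5]
    exact h4
  -- G
  set G := ∑ j ∈ Finset.range (2*d+1),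
      (if j = 0 then (1:PowerSeries ℚ) else 2) * ((-1:PowerSeries ℚ)^j * X^((t+2)*j^2)) with hG
  -- B3 : TT (t+1) (2d) ≡ pc 1 d * pc 1 d * G
  have form : TT (t+1) (2*d) = ∑ j ∈ Finset.range (2*d+1),
      (if j = 0 then (1:PowerSeries ℚ) else 2) *
        ((-1 : PowerSeries ℚ) ^ j * X ^ ((t+2) * j^2) * (pc 1 (2*d-j) * pc 1 (2*d+j))) := by
    rw [TT_formula (t+1) (2*d)]
  have B3 : md d (TT (t+1) (2*d))
      (∑ j ∈ Finset.range (2*d+1),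
        (if j = 0 then (1:PowerSeries ℚ) else 2) *
          ((-1 : PowerSeries ℚ) ^ j * X ^ ((t+2) * j^2) * (pc 1 d * pc 1 d))) := by
    rw [form]
    apply md_sum
    intro j hj
    by_cases hjd : (t+2) * j^2 ≤ d
    · have hjd' : j ≤ d := by nlinarith [sq_nonneg j]
      exact md_mul (md_refl _) (md_mul (md_refl _)
        (md_mul (md_pc_any one_pos (by omega) (by omega))
          (md_pc_any one_pos (by omega) (by omega))))
    · have h0 : md d ((if j = 0 then (1:PowerSeries ℚ) else 2) *
          ((-1 : PowerSeries ℚ) ^ j * X ^ ((t+2) * j^2) * (pc 1 (2*d-j) * pc 1 (2*d+j)))) 0 :=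
        md_zero_eq ((t+2)*j^2) ((if j = 0 then (1:PowerSeries ℚ) else 2) *
          ((-1 : PowerSeries ℚ) ^ j * (pc 1 (2*d-j) * pc 1 (2*d+j)))) (by ring) (by omega)
      have h0' : md d ((if j = 0 then (1:PowerSeries ℚ) else 2) *
          ((-1 : PowerSeries ℚ) ^ j * X ^ ((t+2) * j^2) * (pc 1 d * pc 1 d))) 0 :=
        md_zero_eq ((t+2)*j^2) ((if j = 0 then (1:PowerSeries ℚ) else 2) *
          ((-1 : PowerSeries ℚ) ^ j * (pc 1 d * pc 1 d))) (by ring) (by omega)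
      exact md_trans h0 (md_symm h0')
  have B3' : (∑ j ∈ Finset.range (2*d+1),
        (if j = 0 then (1:PowerSeries ℚ) else 2) *
          ((-1 : PowerSeries ℚ) ^ j * X ^ ((t+2) * j^2) * (pc 1 d * pc 1 d)))
      = pc 1 d * pc 1 d * G := by
    rw [hG, Finset.mul_sum]
    exact Finset.sum_congr rfl (fun j hj => by ring)
  -- B4 : G ≡ pk (t+2) d * podd (t+2) (2d)
  have bf := base_folded hp (2*d)
  have B4a : md d (podd (t+2) (2*d) * pc (t+2) (2*(2*d)))
      (∑ j ∈ Finset.range (2*d+1),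
        (if j = 0 then (1:PowerSeries ℚ) else 2) *
          ((-1 : PowerSeries ℚ) ^ j * X ^ ((t+2) * j^2) * (pc (t+2) d * pc (t+2) d))) := by
    rw [← bf]
    apply md_sum
    intro j hj
    by_cases hjd : (t+2) * j^2 ≤ d
    · have hjd' : j ≤ d := by nlinarith [sq_nonneg j]
      exact md_mul (md_refl _) (md_mul (md_refl _)
        (md_mul (md_pc_any hp (by omega) (by omega))
          (md_pc_any hp (by omega) (by omega))))
    · have h0 : md d ((if j = 0 then (1:PowerSeries ℚ) else 2) *
          ((-1 : PowerSeries ℚ) ^ j * X ^ ((t+2) * j^2) * (pc (t+2) (2*d-j) * pc (t+2) (2*d+j)))) 0 :=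
        md_zero_eq ((t+2)*j^2) ((if j = 0 then (1:PowerSeries ℚ) else 2) *
          ((-1 : PowerSeries ℚ) ^ j * (pc (t+2) (2*d-j) * pc (t+2) (2*d+j)))) (by ring) (by omega)
      have h0' : md d ((if j = 0 then (1:PowerSeries ℚ) else 2) *
          ((-1 : PowerSeries ℚ) ^ j * X ^ ((t+2) * j^2) * (pc (t+2) d * pc (t+2) d))) 0 :=
        md_zero_eq ((t+2)*j^2) ((if j = 0 then (1:PowerSeries ℚ) else 2) *
          ((-1 : PowerSeries ℚ) ^ j * (pc (t+2) d * pc (t+2) d))) (by ring) (by omega)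
      exact md_trans h0 (md_symm h0')
  have B4b : (∑ j ∈ Finset.range (2*d+1),
        (if j = 0 then (1:PowerSeries ℚ) else 2) *
          ((-1 : PowerSeries ℚ) ^ j * X ^ ((t+2) * j^2) * (pc (t+2) d * pc (t+2) d)))
      = pc (t+2) d * pc (t+2) d * G := by
    rw [hG, Finset.mul_sum]
    exact Finset.sum_congr rfl (fun j hj => by ring)
  have Gexpand : G = pk (t+2) d * pk (t+2) d * (pc (t+2) d * pc (t+2) d * G) := by
    calc G = (pk (t+2) d * pc (t+2) d) * ((pk (t+2) d * pc (t+2) d) * G) := by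
          rw [pk_mul_pc hp, one_mul, one_mul]
      _ = pk (t+2) d * pk (t+2) d * (pc (t+2) d * pc (t+2) d * G) := by ring
  have B4 : md d G (pk (t+2) d * pk (t+2) d * (podd (t+2) (2*d) * pc (t+2) (2*(2*d)))) := by
    rw [Gexpand]
    exact md_mul (md_refl _) ((md_symm (B4b ▸ B4a)))
  have c4 : md d (pc (t+2) (2*(2*d))) (pc (t+2) d) := md_pc_any hp (by omega) (by omega)
  have B5 : md d G (pk (t+2) d * podd (t+2) (2*d)) := by
    have h6 : md d G (pk (t+2) d * pk (t+2) d * (podd (t+2) (2*d) * pc (t+2) d)) :=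
      md_trans B4 (md_mul (md_refl _) (md_mul (md_refl _) c4))
    have h7 : pk (t+2) d * pk (t+2) d * (podd (t+2) (2*d) * pc (t+2) d)
        = pk (t+2) d * podd (t+2) (2*d) := by
      calc pk (t+2) d * pk (t+2) d * (podd (t+2) (2*d) * pc (t+2) d)
          = (pk (t+2) d * podd (t+2) (2*d)) * (pk (t+2) d * pc (t+2) d) := by ring
        _ = pk (t+2) d * podd (t+2) (2*d) := by rw [pk_mul_pc hp, mul_one]
    rw [h7] at h6
    exact h6
  -- assemble
  have c9 : md d L0 (pc 1 d * G) := by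
    have c7 : md d L0 (pk 1 d * (pc 1 d * pc 1 d * G)) :=
      md_trans (md_symm B1) (md_mul (md_refl _) (B3' ▸ B3))
    have c8 : pk 1 d * (pc 1 d * pc 1 d * G) = pc 1 d * G := by
      calc pk 1 d * (pc 1 d * pc 1 d * G) = (pk 1 d * pc 1 d) * (pc 1 d * G) := by ring
        _ = pc 1 d * G := by rw [pk_mul_pc one_pos, one_mul]
    rw [c8] at c7
    exact c7
  exact md_trans c9 (md_mul (md_refl _) B5)

lemma partC (t d : ℕ) :
    md d (pk (2*(t+2)) (d+1) * pc 1 (d+1) * (podd (t+2) (d+1) * podd (t+2) (d+1)))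
         (pc 1 d * (pk (t+2) d * podd (t+2) (2*d))) := by
  have hp : 0 < t + 2 := by omega
  have split : pk (t+2) (2*(d+1)) = pk (2*(t+2)) (d+1) * podd (t+2) (d+1) :=
    pk_even_split (t+2) (d+1)
  have e1 : pk (2*(t+2)) (d+1) * pc 1 (d+1) * (podd (t+2) (d+1) * podd (t+2) (d+1))
      = pc 1 (d+1) * (pk (t+2) (2*(d+1)) * podd (t+2) (d+1)) := by
    rw [split]; ring
  rw [e1]
  exact md_mul (md_pc_any one_pos (by omega) (by omega))
    (md_mul (md_pk_any hp (by omega) (by omega))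
      (md_podd_any hp (by omega) (by omega)))

def val (t : ℕ) (f : ℕ → ℕ) : PowerSeries ℚ :=
  X ^ (∑ i ∈ Finset.range t, f i ^ 2) *
    ((∏ i ∈ Finset.range (t-1), pc 1 (f i - f (i+1))) * pc 2 (f (t-1)))

lemma finsum_to_range {n d : ℕ} (hn : n ≤ d) (F : ℕ → PowerSeries ℚ) :
    ∑ a : Fin (d+1), (if (a:ℕ) ≤ n then F (a:ℕ) else 0) = ∑ k ∈ Finset.range (n+1), F k := by
  rw [Fin.sum_univ_eq_sum_range (fun i => if i ≤ n then F i else 0) (d+1)]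
  rw [← Finset.sum_subset (Finset.range_subset_range.mpr (by omega : n+1 ≤ d+1))
    (fun x hx hx2 => if_neg (by have := Finset.mem_range.not.mp hx2; omega))]
  exact Finset.sum_congr rfl fun k hk => if_pos (by have := Finset.mem_range.mp hk; omega)

lemma mono_cons_iff {t d : ℕ} (a : Fin (d+1)) (u : Fin (t+1) → Fin (d+1)) :
    (∀ i j : Fin (t+2), i ≤ j → ((Fin.cons a u : ∀ _ : Fin (t+2), Fin (d+1)) j : ℕ)
        ≤ ((Fin.cons a u : ∀ _ : Fin (t+2), Fin (d+1)) i : ℕ))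
      ↔ ((∀ i j : Fin (t+1), i ≤ j → (u j : ℕ) ≤ (u i : ℕ)) ∧ (u 0 : ℕ) ≤ (a : ℕ)) := by
  constructor
  · intro h
    constructor
    · intro i j hij
      have := h (Fin.succ i) (Fin.succ j) (by
        rw [Fin.le_def] at hij ⊢
        simpa using hij)
      simpa [Fin.cons_succ] using this
    · have := h 0 (Fin.succ 0) (by
        rw [Fin.le_def]
        simp)
      simpa [Fin.cons_succ, Fin.cons_zero] using this
  · rintro ⟨hu, ha⟩ i j hij
    induction j using Fin.cases with
    | zero =>
      have hi0 : i = 0 := le_antisymm (by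
        rw [Fin.le_def] at hij ⊢
        simpa using hij) (Fin.zero_le i)
      subst hi0
      exact le_rfl
    | succ j' =>
      induction i using Fin.cases with
      | zero =>
        rw [Fin.cons_zero, Fin.cons_succ]
        calc (u j' : ℕ) ≤ (u 0 : ℕ) := hu 0 j' (Fin.zero_le j')
          _ ≤ (a : ℕ) := ha
      | succ i' =>
        rw [Fin.cons_succ, Fin.cons_succ]
        apply hu
        rw [Fin.le_def] at hij ⊢
        simpa using hij

lemma comb (d : ℕ) : ∀ (t : ℕ) (w : ℕ → PowerSeries ℚ) (n : ℕ), n ≤ d →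
    ∑ s ∈ Finset.univ.filter (fun s : Fin (t+1) → Fin (d+1) =>
        (∀ i j : Fin (t+1), i ≤ j → (s j : ℕ) ≤ (s i : ℕ)) ∧ (s 0 : ℕ) ≤ n),
      w (s 0) * val (t+1) (fun k => if h : k < t+1 then (s ⟨k, h⟩ : ℕ) else 0)
    = ∑ k ∈ Finset.range (n+1), w k * ((X:PowerSeries ℚ)^(k^2) * TT t k) := by
  intro t
  induction t with
  | zero =>
    intro w n hn
    rw [Finset.sum_filter]
    rw [← Equiv.sum_comp (Equiv.funUnique (Fin 1) (Fin (d+1))).symm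
      (fun s : Fin 1 → Fin (d+1) =>
        if ((∀ i j : Fin 1, i ≤ j → (s j : ℕ) ≤ (s i : ℕ)) ∧ (s 0 : ℕ) ≤ n)
        then w (s 0) * val 1 (fun k => if h : k < 1 then (s ⟨k, h⟩ : ℕ) else 0) else 0)]
    rw [← finsum_to_range hn (fun k => w k * ((X:PowerSeries ℚ)^(k^2) * TT 0 k))]
    apply Finset.sum_congr rfl
    intro a _
    have e1 : ((Equiv.funUnique (Fin 1) (Fin (d+1))).symm a : Fin 1 → Fin (d+1))
        = fun _ => a := rfl
    rw [e1]
    have e2 : ((∀ i j : Fin 1, i ≤ j → (((fun _ => a) : Fin 1 → Fin (d+1)) j : ℕ)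
        ≤ (((fun _ => a) : Fin 1 → Fin (d+1)) i : ℕ))
        ∧ ((((fun _ => a) : Fin 1 → Fin (d+1)) 0 : Fin (d+1)) : ℕ) ≤ n) ↔ ((a:ℕ) ≤ n) := by
      simp
    rw [if_congr e2 rfl rfl]
    by_cases hna : (a:ℕ) ≤ n
    · rw [if_pos hna, if_pos hna]
      congr 1
      rw [val]
      simp only [Finset.sum_range_one, Finset.range_zero, Finset.prod_empty, one_mul,
        Nat.sub_self, Nat.zero_lt_one, dif_pos]
      rfl
    · rw [if_neg hna, if_neg hna]
  | succ t ih =>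
    intro w n hn
    rw [Finset.sum_filter]
    rw [← Equiv.sum_comp (Fin.consEquiv (fun _ : Fin (t+2) => Fin (d+1)))
      (fun s : Fin (t+2) → Fin (d+1) =>
        if ((∀ i j : Fin (t+2), i ≤ j → (s j : ℕ) ≤ (s i : ℕ)) ∧ (s 0 : ℕ) ≤ n)
        then w (s 0) * val (t+2) (fun k => if h : k < t+2 then (s ⟨k, h⟩ : ℕ) else 0) else 0)]
    rw [Fintype.sum_prod_type]
    rw [← finsum_to_range hn (fun k => w k * ((X:PowerSeries ℚ)^(k^2) * TT (t+1) k))]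
    apply Finset.sum_congr rfl
    intro a _
    have inner : ∀ u : Fin (t+1) → Fin (d+1),
        (fun s : Fin (t+2) → Fin (d+1) =>
          if ((∀ i j : Fin (t+2), i ≤ j → (s j : ℕ) ≤ (s i : ℕ)) ∧ (s 0 : ℕ) ≤ n)
          then w (s 0) * val (t+2) (fun k => if h : k < t+2 then (s ⟨k, h⟩ : ℕ) else 0) else 0)
          (Fin.consEquiv (fun _ : Fin (t+2) => Fin (d+1)) (a, u))
        = if ((a:ℕ) ≤ n) then
            (if ((∀ i j : Fin (t+1), i ≤ j → (u j : ℕ) ≤ (u i : ℕ)) ∧ (u 0 : ℕ) ≤ (a:ℕ))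
            then pc 1 ((a:ℕ) - (u 0 : ℕ)) *
                val (t+1) (fun k => if h : k < t+1 then (u ⟨k, h⟩ : ℕ) else 0) else 0)
            * (w (a:ℕ) * (X:PowerSeries ℚ)^((a:ℕ)^2))
          else 0 := by
      intro u
      have hce : (Fin.consEquiv (fun _ : Fin (t+2) => Fin (d+1))) (a, u) = Fin.cons a u := rfl
      simp only [hce, Fin.cons_zero]
      set gc : ℕ → ℕ := fun k =>
        if h : k < t+2 then ((Fin.cons a u : ∀ _, Fin (d+1)) ⟨k, h⟩ : ℕ) else 0 with hgc
      set gu : ℕ → ℕ := fun k => if h : k < t+1 then (u ⟨k, h⟩ : ℕ) else 0 with hgu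
      have hg0 : gc 0 = (a : ℕ) := by
        rw [hgc]
        simp only []
        rw [dif_pos (by omega : (0:ℕ) < t+2)]
        rfl
      have hgs : ∀ i : ℕ, gc (i+1) = gu i := by
        intro i
        by_cases hi : i < t + 1
        · rw [hgc, hgu]
          simp only []
          rw [dif_pos (by omega : i+1 < t+2), dif_pos hi]
          have hidx : (⟨i+1, by omega⟩ : Fin (t+2)) = Fin.succ ⟨i, hi⟩ := rfl
          rw [hidx, Fin.cons_succ]
        · rw [hgc, hgu]
          simp only []
          rw [dif_neg (by omega), dif_neg hi]
      have hgu0 : gu 0 = (u 0 : ℕ) := by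
        rw [hgu]
        simp only []
        rw [dif_pos (by omega : (0:ℕ) < t+1)]
        rfl
      have hval : val (t+2) gc = pc 1 ((a:ℕ) - (u 0 : ℕ)) * val (t+1) gu *
          (X:PowerSeries ℚ)^((a:ℕ)^2) := by
        rw [val, val]
        have hsum : ∑ i ∈ Finset.range (t+2), gc i ^2
            = (∑ i ∈ Finset.range (t+1), gu i ^2) + (a:ℕ)^2 := by
          rw [Finset.sum_range_succ' (fun i => gc i ^ 2) (t+1), hg0]
          congr 1
          exact Finset.sum_congr rfl (fun i _ => by rw [hgs i])
        have hprod : ∏ i ∈ Finset.range (t+2-1), pc 1 (gc i - gc (i+1))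
            = (∏ i ∈ Finset.range (t+1-1), pc 1 (gu i - gu (i+1))) * pc 1 ((a:ℕ) - gu 0) := by
          rw [show t+2-1 = t+1 from rfl,
            Finset.prod_range_succ' (fun i => pc 1 (gc i - gc (i+1))) t, hg0, hgs 0]
          congr 1
          rw [show t+1-1 = t from rfl]
          exact Finset.prod_congr rfl (fun i _ => by rw [hgs i, hgs (i+1)])
        have hlast : gc (t+2-1) = gu (t+1-1) := by
          rw [show t+2-1 = t+1 from rfl, show t+1-1 = t from rfl, hgs t]
        rw [hsum, hprod, hlast, pow_add, hgu0]
        ring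
      have hcond : ((∀ i j : Fin (t+2), i ≤ j →
            ((Fin.cons a u : ∀ _ : Fin (t+2), Fin (d+1)) j : ℕ)
              ≤ ((Fin.cons a u : ∀ _ : Fin (t+2), Fin (d+1)) i : ℕ)) ∧ (a : ℕ) ≤ n)
          ↔ (((∀ i j : Fin (t+1), i ≤ j → (u j : ℕ) ≤ (u i : ℕ)) ∧ (u 0 : ℕ) ≤ (a:ℕ))
              ∧ (a:ℕ) ≤ n) :=
        and_congr (mono_cons_iff a u) Iff.rfl
      by_cases h1 : (a:ℕ) ≤ n
      · by_cases h2 : ((∀ i j : Fin (t+1), i ≤ j → (u j : ℕ) ≤ (u i : ℕ)) ∧ (u 0 : ℕ) ≤ (a:ℕ))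
        · rw [if_pos (hcond.mpr ⟨h2, h1⟩), if_pos h1, if_pos h2, hval]
          ring
        · rw [if_neg (fun hc => h2 (hcond.mp hc).1), if_pos h1, if_neg h2, zero_mul]
      · rw [if_neg (fun hc => h1 (hcond.mp hc).2), if_neg h1]
    rw [Finset.sum_congr rfl (fun u _ => inner u)]
    by_cases h1 : (a:ℕ) ≤ n
    · simp only [if_pos h1]
      rw [← Finset.sum_mul]
      have hIH := ih (fun j => pc 1 ((a:ℕ) - j)) (a:ℕ) (Nat.lt_succ_iff.mp a.isLt)
      rw [Finset.sum_filter] at hIH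
      rw [hIH]
      rw [show (∑ k ∈ Finset.range ((a:ℕ)+1), pc 1 ((a:ℕ)-k) * ((X:PowerSeries ℚ)^(k^2) * TT t k))
          = TT (t+1) (a:ℕ) from rfl]
      ring
    · simp only [if_neg h1, Finset.sum_const_zero]

lemma qp_eq_pk (k : ℕ) : qp k = pk 1 k := by
  rw [qp, pk]
  exact Finset.prod_congr rfl (fun j _ => by rw [one_mul])

lemma prod_qp_inv (r : ℕ) (e : ℕ → ℕ) :
    (∏ i ∈ Finset.range r, qp (e i))⁻¹ = ∏ i ∈ Finset.range r, pc 1 (e i) := by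
  induction r with
  | zero => simp
  | succ r ih =>
    rw [Finset.prod_range_succ, Finset.prod_range_succ, PowerSeries.mul_inv_rev, ih,
      qp_eq_pk, mul_comm]
    rfl

lemma inv_block (r : ℕ) (e : ℕ → ℕ) (b : ℕ) :
    ((∏ i ∈ Finset.range r, qp (e i)) * qp2 b)⁻¹
      = (∏ i ∈ Finset.range r, pc 1 (e i)) * pc 2 b := by
  rw [PowerSeries.mul_inv_rev, prod_qp_inv, mul_comm]
  rfl


/-- Bressoud's even-modulus identity, stated coefficientwise as formal power series in
`q`: for every degree `d`, the coefficient of `q^d` of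
`∑_{s₁ ≥ ⋯ ≥ s_m ≥ 0} q^{s₁²+⋯+s_m²}/((q)_{s₁-s₂}⋯(q)_{s_{m-1}-s_m}(q²;q²)_{s_m})` equals
that of `(q^{2m+2};q^{2m+2})_∞/(q)_∞ · θ(q^{m+1};q^{2m+2})`, where
`θ(q^{m+1};q^{2m+2}) = ∏_{j≥0}(1-q^{(2m+2)j+m+1})²`.  Tuples with some `s_i > d` and
product factors of degree `> d` contribute nothing to the coefficient of `q^d`, so both
sides are truncated accordingly. -/
theorem bressoud (m : ℕ) (hm : 1 ≤ m) (d : ℕ) :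
    PowerSeries.coeff d
        (∑ s ∈ Finset.univ.filter
            (fun s : Fin m → Fin (d + 1) => ∀ i j : Fin m, i ≤ j → (s j : ℕ) ≤ (s i : ℕ)),
          (PowerSeries.X : PowerSeries ℚ) ^
              (∑ i ∈ Finset.range m, ((fun k => if h : k < m then (s ⟨k, h⟩ : ℕ) else 0) i) ^ 2) *
            ((∏ i ∈ Finset.range (m - 1),
                qp ((fun k => if h : k < m then (s ⟨k, h⟩ : ℕ) else 0) i
                    - (fun k => if h : k < m then (s ⟨k, h⟩ : ℕ) else 0) (i + 1))) *
              qp2 ((fun k => if h : k < m then (s ⟨k, h⟩ : ℕ) else 0) (m - 1)))⁻¹)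
      = PowerSeries.coeff d
        ((∏ j ∈ Finset.range (d + 1), (1 - (PowerSeries.X : PowerSeries ℚ) ^ ((2 * m + 2) * (j + 1)))) *
          (∏ j ∈ Finset.range (d + 1), (1 - (PowerSeries.X : PowerSeries ℚ) ^ (j + 1)))⁻¹ *
          ∏ j ∈ Finset.range (d + 1),
            ((1 - (PowerSeries.X : PowerSeries ℚ) ^ ((2 * m + 2) * j + (m + 1))) *
              (1 - (PowerSeries.X : PowerSeries ℚ) ^ ((2 * m + 2) * j + (m + 1))))) := by
  obtain ⟨t, rfl⟩ : ∃ t, m = t + 1 := ⟨m - 1, by omega⟩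
  have hfilter : (Finset.univ.filter
      (fun s : Fin (t+1) → Fin (d + 1) => ∀ i j : Fin (t+1), i ≤ j → (s j : ℕ) ≤ (s i : ℕ)))
      = (Finset.univ.filter (fun s : Fin (t+1) → Fin (d+1) =>
          (∀ i j : Fin (t+1), i ≤ j → (s j : ℕ) ≤ (s i : ℕ)) ∧ (s 0 : ℕ) ≤ d)) := by
    apply Finset.filter_congr
    intro s _
    have hb : (s 0 : ℕ) ≤ d := Nat.lt_succ_iff.mp (s 0).isLt
    constructor
    · intro h; exact ⟨h, hb⟩
    · intro h; exact h.1
  have hsummand : ∀ s ∈ (Finset.univ.filter (fun s : Fin (t+1) → Fin (d+1) =>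
          (∀ i j : Fin (t+1), i ≤ j → (s j : ℕ) ≤ (s i : ℕ)) ∧ (s 0 : ℕ) ≤ d)),
      (PowerSeries.X : PowerSeries ℚ) ^
          (∑ i ∈ Finset.range (t+1), ((fun k => if h : k < t+1 then (s ⟨k, h⟩ : ℕ) else 0) i) ^ 2) *
        ((∏ i ∈ Finset.range (t+1 - 1),
            qp ((fun k => if h : k < t+1 then (s ⟨k, h⟩ : ℕ) else 0) i
                - (fun k => if h : k < t+1 then (s ⟨k, h⟩ : ℕ) else 0) (i + 1))) *
          qp2 ((fun k => if h : k < t+1 then (s ⟨k, h⟩ : ℕ) else 0) (t+1 - 1)))⁻¹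
      = (fun _ : ℕ => (1 : PowerSeries ℚ)) ((s 0 : ℕ)) *
          val (t+1) (fun k => if h : k < t+1 then (s ⟨k, h⟩ : ℕ) else 0) := by
    intro s _
    rw [inv_block]
    show _ = (1 : PowerSeries ℚ) * val (t+1) (fun k => if h : k < t+1 then (s ⟨k, h⟩ : ℕ) else 0)
    rw [val, one_mul]
  rw [hfilter, Finset.sum_congr rfl hsummand, comb d t (fun _ => (1:PowerSeries ℚ)) d le_rfl]
  have honemul : ∀ k ∈ Finset.range (d+1),
      (fun _ : ℕ => (1 : PowerSeries ℚ)) k * ((X:PowerSeries ℚ)^(k^2) * TT t k)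
      = (X:PowerSeries ℚ)^(k^2) * TT t k := fun k _ => one_mul _
  rw [Finset.sum_congr rfl honemul]
  have E1 : (∏ j ∈ Finset.range (d + 1),
        (1 - (PowerSeries.X : PowerSeries ℚ) ^ ((2 * (t+1) + 2) * (j + 1))))
      = pk (2*(t+2)) (d+1) :=
    Finset.prod_congr rfl (fun j _ => by rw [show (2*(t+1)+2)*(j+1) = (2*(t+2))*(j+1) by ring])
  have E2 : (∏ j ∈ Finset.range (d + 1), (1 - (PowerSeries.X : PowerSeries ℚ) ^ (j + 1)))
      = pk 1 (d+1) :=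
    Finset.prod_congr rfl (fun j _ => by rw [one_mul])
  have E3 : (∏ j ∈ Finset.range (d + 1),
        ((1 - (PowerSeries.X : PowerSeries ℚ) ^ ((2 * (t+1) + 2) * j + (t+1 + 1))) *
          (1 - (PowerSeries.X : PowerSeries ℚ) ^ ((2 * (t+1) + 2) * j + (t+1 + 1)))))
      = podd (t+2) (d+1) * podd (t+2) (d+1) := by
    rw [Finset.prod_mul_distrib]
    have e : (∏ j ∈ Finset.range (d + 1),
        (1 - (PowerSeries.X : PowerSeries ℚ) ^ ((2 * (t+1) + 2) * j + (t+1 + 1))))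
        = podd (t+2) (d+1) := by
      rw [podd]
      exact Finset.prod_congr rfl
        (fun j _ => by rw [show (2*(t+1)+2)*j + (t+1+1) = (t+2)*(2*j+1) by ring])
    rw [e]
  rw [E1, E2, E3, show (pk 1 (d+1))⁻¹ = pc 1 (d+1) from rfl]
  calc PowerSeries.coeff d (∑ k ∈ Finset.range (d+1), (X:PowerSeries ℚ)^(k^2) * TT t k)
      = PowerSeries.coeff d (pc 1 d * (pk (t+2) d * podd (t+2) (2*d))) :=
        md_coeff (partB t d)
    _ = PowerSeries.coeff d
          (pk (2*(t+2)) (d+1) * pc 1 (d+1) * (podd (t+2) (d+1) * podd (t+2) (d+1))) :=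
        (md_coeff (partC t d)).symm

end BressoudProof
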